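/- Let n ≥ M ≥ 1 be integers and 0 ≤ a ≤ b < ∞ reals. Then ∫_{b ≥ x_1 ≥ x_2 ≥ ⋯ ≥ x_M ≥ a} Π_{1≤i<j≤M} (x_i − x_j)^2 · Π_{i=1}^M x_i^{n−M} e^{−x_i} dx_1⋯dx_M = det B, where B is the M×M matrix with entries b_{i,j} = γ(n−M+i+j−1, b) − γ(n−M+i+j−1, a) and γ(s, t) := ∫_0^t u^{s−1} e^{−u} du is the lower incomplete gamma function. (Multiplied by the Wishart normalizing constant 1/Π_{i=1}^M (n−i)!(M−i)!, this gives the probability that all eigenvalues of a complex central uncorrelated Wishart matrix of dimension M with n degrees of freedom lie in the interval [a,b].) -/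

import Mathlib

open MeasureTheory

/-- The lower incomplete gamma function `γ(s, t) = ∫_0^t u^{s-1} e^{-u} du`
(for a natural-number parameter `s`). -/
noncomputable def lowGamma (s : ℕ) (t : ℝ) : ℝ :=
  ∫ u in (0 : ℝ)..t, u ^ (s - 1) * Real.exp (-u)


open Finset

namespace Stmt15Aux

variable {M : ℕ}

/-- weight function -/
noncomputable def w (m : ℕ) (u : ℝ) : ℝ := u ^ m * Real.exp (-u)

/-- the full integrand -/
noncomputable def F (m : ℕ) (x : Fin M → ℝ) : ℝ :=
  (Matrix.vandermonde x).det ^ 2 * ∏ i, w m (x i)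

def cube (a b : ℝ) (M : ℕ) : Set (Fin M → ℝ) := {x | ∀ i, x i ∈ Set.Icc a b}

def sect (a b : ℝ) (σ : Equiv.Perm (Fin M)) : Set (Fin M → ℝ) :=
  {x | (∀ i j : Fin M, i ≤ j → x (σ j) ≤ x (σ i)) ∧ x ∈ cube a b M}

noncomputable def matA (m : ℕ) (a b : ℝ) (M : ℕ) : Matrix (Fin M) (Fin M) ℝ :=
  Matrix.of fun i j => ∫ u in Set.Icc a b, u ^ (i : ℕ) * u ^ (j : ℕ) * w m u

lemma continuous_w (m : ℕ) : Continuous (w m) := by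
  unfold w; fun_prop

lemma vdm_sq (x : Fin M → ℝ) :
    (∏ i, ∏ j ∈ Finset.Ioi i, (x i - x j) ^ 2) = (Matrix.vandermonde x).det ^ 2 := by
  rw [Matrix.det_vandermonde, ← Finset.prod_pow]
  refine Finset.prod_congr rfl fun i _ => ?_
  rw [← Finset.prod_pow]
  exact Finset.prod_congr rfl fun j _ => by ring

lemma continuous_F (m : ℕ) : Continuous (F (M := M) m) := by
  have : F (M := M) m = fun x => (∏ i, ∏ j ∈ Finset.Ioi i, (x i - x j) ^ 2) * ∏ i, w m (x i) := by
    funext x; rw [F, vdm_sq]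
  rw [this]; unfold w; fun_prop

lemma isClosed_sect (a b : ℝ) (σ : Equiv.Perm (Fin M)) : IsClosed (sect a b σ) := by
  have h1 : IsClosed {x : Fin M → ℝ | ∀ i j : Fin M, i ≤ j → x (σ j) ≤ x (σ i)} := by
    have : {x : Fin M → ℝ | ∀ i j : Fin M, i ≤ j → x (σ j) ≤ x (σ i)}
        = ⋂ i, ⋂ j, {x : Fin M → ℝ | i ≤ j → x (σ j) ≤ x (σ i)} := by
      ext x; simp
    rw [this]
    refine isClosed_iInter fun i => isClosed_iInter fun j => ?_
    by_cases hij : i ≤ j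
    · simp only [hij, true_implies]
      exact isClosed_le (continuous_apply _) (continuous_apply _)
    · simp only [hij, false_implies]
      exact isClosed_univ
  have h2 : IsClosed (cube a b M) := by
    have : cube a b M = ⋂ i, {x : Fin M → ℝ | x i ∈ Set.Icc a b} := by ext x; simp [cube]
    rw [this]
    exact isClosed_iInter fun i =>
      IsClosed.preimage (continuous_apply i) isClosed_Icc
  exact h1.inter h2

lemma cube_eq_pi (a b : ℝ) : cube a b M = Set.pi Set.univ fun _ : Fin M => Set.Icc a b := by
  ext x; simp only [cube, Set.mem_univ_pi, Set.mem_setOf_eq]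

lemma isCompact_cube (a b : ℝ) : IsCompact (cube a b M) := by
  rw [cube_eq_pi]; exact isCompact_univ_pi fun _ => isCompact_Icc

lemma measurableSet_cube (a b : ℝ) : MeasurableSet (cube a b M) :=
  ((isCompact_cube (M := M) a b).isClosed).measurableSet

/-- the set of "ties" -/
def ties (M : ℕ) : Set (Fin M → ℝ) := ⋃ i, ⋃ j, {x : Fin M → ℝ | x i = x j ∧ i ≠ j}

lemma mem_ties_iff (x : Fin M → ℝ) : x ∈ ties M ↔ ¬ Function.Injective x := by
  rw [Function.not_injective_iff]
  simp only [ties, Set.mem_iUnion, Set.mem_setOf_eq]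

lemma measurableSet_ties : MeasurableSet (ties M) := by
  refine MeasurableSet.iUnion fun i => MeasurableSet.iUnion fun j => ?_
  have : {x : Fin M → ℝ | x i = x j ∧ i ≠ j}
      = {x : Fin M → ℝ | x i = x j} ∩ {x | i ≠ j} := rfl
  rw [this]
  refine MeasurableSet.inter ((isClosed_eq (continuous_apply i) (continuous_apply j)).measurableSet) ?_
  by_cases h : i = j
  · simp [h]
  · have : {x : Fin M → ℝ | i ≠ j} = Set.univ := by ext x; simp [h]
    rw [this]; exact MeasurableSet.univ

lemma ties_null : volume (ties M) = 0 := by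
  refine measure_iUnion_null fun i => measure_iUnion_null fun j => ?_
  by_cases h : i = j
  · have : {x : Fin M → ℝ | x i = x j ∧ i ≠ j} = ∅ := by ext x; simp [h]
    simp [this]
  · set L : (Fin M → ℝ) →ₗ[ℝ] ℝ := (LinearMap.proj (R := ℝ) (φ := fun _ : Fin M => ℝ) i) - (LinearMap.proj (R := ℝ) (φ := fun _ : Fin M => ℝ) j) with hL
    have hsub : {x : Fin M → ℝ | x i = x j ∧ i ≠ j} ⊆ (LinearMap.ker L : Set (Fin M → ℝ)) := by
      intro x hx
      simp only [SetLike.mem_coe, LinearMap.mem_ker, hL, LinearMap.sub_apply, LinearMap.proj_apply]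
      rw [hx.1]; ring
    refine measure_mono_null hsub ?_
    refine Measure.addHaar_submodule _ _ ?_
    intro htop
    have hmem : Pi.single i (1:ℝ) ∈ LinearMap.ker L := by rw [htop]; trivial
    rw [LinearMap.mem_ker, hL] at hmem
    simp only [LinearMap.sub_apply, LinearMap.proj_apply] at hmem
    rw [Pi.single_eq_same, Pi.single_eq_of_ne (Ne.symm h)] at hmem
    norm_num at hmem

lemma F_perm (m : ℕ) (σ : Equiv.Perm (Fin M)) (x : Fin M → ℝ) :
    F m (x ∘ σ) = F m x := by
  unfold F
  have h2 : ∏ i, w m ((x ∘ σ) i) = ∏ i, w m (x i) :=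
    Equiv.prod_comp σ (fun i => w m (x i))
  rw [h2]
  congr 1
  have hV : Matrix.vandermonde (x ∘ σ) = fun i => Matrix.vandermonde x (σ i) := by
    funext i j; simp [Matrix.vandermonde]
  have hV2 : (fun i => Matrix.vandermonde x (σ i)) = (Matrix.vandermonde x).submatrix σ id := rfl
  rw [hV, hV2, Matrix.det_permute]
  rcases Int.units_eq_one_or (Equiv.Perm.sign σ) with h | h <;> rw [h] <;> push_cast <;> ring

/-- permuting a sector's integral gives the identity sector -/
lemma sect_integral_eq (m : ℕ) (a b : ℝ) (σ : Equiv.Perm (Fin M)) :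
    ∫ x in sect a b σ, F m x = ∫ x in sect a b (1 : Equiv.Perm (Fin M)), F m x := by
  set e : Fin M ≃ Fin M := (σ⁻¹ : Equiv.Perm (Fin M))
  set T := MeasurableEquiv.piCongrLeft (fun _ : Fin M => ℝ) e with hT
  have hTapp : ∀ (x : Fin M → ℝ) (j : Fin M), T x j = x (σ j) := by
    intro x j
    have h := MeasurableEquiv.piCongrLeft_apply_apply (β := fun _ : Fin M => ℝ) e x (e.symm j)
    rw [Equiv.apply_symm_apply] at h
    rw [hT, h]
    rfl
  have hmp : MeasurePreserving T volume volume :=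
    volume_measurePreserving_piCongrLeft (fun _ : Fin M => ℝ) e
  have hpre : T ⁻¹' (sect a b 1) = sect a b σ := by
    ext x
    simp only [Set.mem_preimage, sect, cube, Set.mem_setOf_eq, Equiv.Perm.coe_one, id_eq]
    constructor
    · rintro ⟨h1, h2⟩
      refine ⟨fun i j hij => by simpa [hTapp] using h1 i j hij, fun i => ?_⟩
      have := h2 (σ⁻¹ i)
      rwa [hTapp, Equiv.Perm.inv_def σ, Equiv.apply_symm_apply] at this
    · rintro ⟨h1, h2⟩
      exact ⟨fun i j hij => by simpa [hTapp] using h1 i j hij, fun i => by rw [hTapp]; exact h2 _⟩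
  have := hmp.setIntegral_preimage_emb (MeasurableEquiv.measurableEmbedding T)
    (F m) (sect a b (1 : Equiv.Perm (Fin M)))
  rw [hpre] at this
  rw [← this]
  refine setIntegral_congr_fun ((isClosed_sect a b σ).measurableSet) fun x _ => ?_
  have : T x = x ∘ σ := by funext j; exact hTapp x j
  rw [this, F_perm]

lemma sect_subset_cube (a b : ℝ) (σ : Equiv.Perm (Fin M)) : sect a b σ ⊆ cube a b M :=
  fun _ hx => hx.2

lemma cube_subset_iUnion (a b : ℝ) : cube a b M ⊆ ⋃ σ : Equiv.Perm (Fin M), sect a b σ := by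
  intro x hx
  set σ0 := Tuple.sort x
  set σ : Equiv.Perm (Fin M) := σ0 * Fin.revPerm
  refine Set.mem_iUnion.2 ⟨σ, fun i j hij => ?_, hx⟩
  have hmono := Tuple.monotone_sort x
  have h1 : σ j = σ0 (Fin.rev j) := rfl
  have h2 : σ i = σ0 (Fin.rev i) := rfl
  rw [h1, h2]
  exact hmono (Fin.rev_le_rev.2 hij)

lemma sect_disjoint (a b : ℝ) {σ τ : Equiv.Perm (Fin M)} (h : σ ≠ τ) :
    Disjoint (sect a b σ \ ties M) (sect a b τ \ ties M) := by
  rw [Set.disjoint_left]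
  rintro x ⟨hxσ, hxT⟩ ⟨hxτ, _⟩
  have hinj : Function.Injective x := by
    by_contra hni
    exact hxT ((mem_ties_iff x).2 hni)
  apply h
  have key : ∀ (ρ : Equiv.Perm (Fin M)), (∀ i j : Fin M, i ≤ j → x (ρ j) ≤ x (ρ i)) →
      StrictMono (fun i => x (ρ (Fin.rev i))) := by
    intro ρ hρ i j hij
    have hlt : Fin.rev j < Fin.rev i := Fin.rev_lt_rev.2 hij
    have hle := hρ _ _ hlt.le
    refine lt_of_le_of_ne hle fun heq => ?_
    exact absurd (hinj heq) (by
      intro hc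
      exact hlt.ne (ρ.injective hc).symm)
  have hfσ := key σ hxσ.1
  have hfτ := key τ hxτ.1
  have hrange : Set.range (fun i => x (σ (Fin.rev i))) = Set.range (fun i => x (τ (Fin.rev i))) := by
    have hr : ∀ (ρ : Equiv.Perm (Fin M)),
        Set.range (fun i => x (ρ (Fin.rev i))) = Set.range x := by
      intro ρ
      have : (fun i => x (ρ (Fin.rev i))) = x ∘ (fun i => ρ (Fin.rev i)) := rfl
      rw [this, Set.range_comp]
      have hsurj : Function.Surjective (fun i => ρ (Fin.rev i)) :=
        ρ.surjective.comp Fin.rev_surjective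
      rw [hsurj.range_eq, Set.image_univ]
    rw [hr, hr]
  haveI : WellFoundedLT (Fin M) := Finite.to_wellFoundedLT
  have heq := (StrictMono.range_inj (β := Fin M) (γ := ℝ) hfσ hfτ).1 hrange
  apply Equiv.ext
  intro j
  have := congrFun heq (Fin.rev j)
  simp only [Fin.rev_rev] at this
  exact hinj this

lemma cube_integral_eq_card_sect (m : ℕ) (a b : ℝ) :
    ∫ x in cube a b M, F m x
      = (Nat.factorial M : ℝ) * ∫ x in sect a b (1 : Equiv.Perm (Fin M)), F m x := by
  have hFint : IntegrableOn (F m) (cube a b M) volume :=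
    (continuous_F m).continuousOn.integrableOn_compact (isCompact_cube a b)
  -- replace cube by the union of the a.e.-disjoint truncated sectors
  have hsets : ∀ σ : Equiv.Perm (Fin M), MeasurableSet (sect a b σ \ ties M) :=
    fun σ => (isClosed_sect a b σ).measurableSet.diff measurableSet_ties
  have hcube_ae : cube a b M =ᵐ[volume] ⋃ σ : Equiv.Perm (Fin M), (sect a b σ \ ties M) := by
    rw [MeasureTheory.ae_eq_set]
    constructor
    · refine measure_mono_null ?_ ties_null
      intro x hx
      rcases hx with ⟨hx1, hx2⟩
      by_contra hxt
      rcases Set.mem_iUnion.1 (cube_subset_iUnion a b hx1) with ⟨σ, hσ⟩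
      exact hx2 (Set.mem_iUnion.2 ⟨σ, hσ, hxt⟩)
    · have : (⋃ σ : Equiv.Perm (Fin M), (sect a b σ \ ties M)) \ cube a b M = ∅ := by
        rw [Set.diff_eq_empty]
        exact Set.iUnion_subset fun σ => (Set.diff_subset).trans (sect_subset_cube a b σ)
      rw [this]; simp
  rw [setIntegral_congr_set hcube_ae]
  have hbU : (⋃ σ : Equiv.Perm (Fin M), (sect a b σ \ ties M))
      = ⋃ σ ∈ (Finset.univ : Finset (Equiv.Perm (Fin M))), (sect a b σ \ ties M) := by
    simp
  rw [hbU, integral_biUnion_finset]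
  · have hterm : ∀ σ : Equiv.Perm (Fin M),
        ∫ x in sect a b σ \ ties M, F m x
          = ∫ x in sect a b (1 : Equiv.Perm (Fin M)), F m x := by
      intro σ
      rw [setIntegral_congr_set (t := sect a b σ), sect_integral_eq]
      refine MeasureTheory.ae_eq_set.2 ⟨?_, ?_⟩
      · have h0 : (sect a b σ \ ties M) \ sect a b σ = ∅ := by
          rw [Set.diff_eq_empty]; exact Set.diff_subset
        rw [h0]; simp
      · refine measure_mono_null ?_ ties_null
        intro x hx
        by_contra hxt
        exact hx.2 ⟨hx.1, hxt⟩
    rw [Finset.sum_congr rfl fun σ _ => hterm σ, Finset.sum_const, Finset.card_univ,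
      Fintype.card_perm, Fintype.card_fin, nsmul_eq_mul]
  · exact fun σ _ => hsets σ
  · intro σ _ τ _ hστ
    exact sect_disjoint a b hστ
  · intro σ _
    exact hFint.mono_set ((Set.diff_subset).trans (sect_subset_cube a b σ))

lemma expandF (m : ℕ) (x : Fin M → ℝ) :
    F m x = ∑ σ : Equiv.Perm (Fin M), ∑ τ : Equiv.Perm (Fin M),
      ((Equiv.Perm.sign σ : ℤ) : ℝ) * ((Equiv.Perm.sign τ : ℤ) : ℝ) *
        ∏ k, (x k ^ ((σ⁻¹ k : Fin M) : ℕ) * x k ^ ((τ⁻¹ k : Fin M) : ℕ) * w m (x k)) := by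
  unfold F
  rw [Matrix.det_apply', sq, Finset.sum_mul_sum, Finset.sum_mul]
  refine Finset.sum_congr rfl fun σ _ => ?_
  rw [Finset.sum_mul]
  refine Finset.sum_congr rfl fun τ _ => ?_
  have hperm : ∀ ρ : Equiv.Perm (Fin M),
      ∏ i, Matrix.vandermonde x (ρ i) i = ∏ k, x k ^ ((ρ⁻¹ k : Fin M) : ℕ) := by
    intro ρ
    rw [← Equiv.prod_comp ρ (fun k => x k ^ ((ρ⁻¹ k : Fin M) : ℕ))]
    exact Finset.prod_congr rfl fun i _ => by
      rw [Equiv.Perm.inv_def ρ, Equiv.symm_apply_apply]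
      simp [Matrix.vandermonde]
  rw [hperm σ, hperm τ, Finset.prod_mul_distrib, Finset.prod_mul_distrib]
  ring

lemma sum_perm_det (A : Matrix (Fin M) (Fin M) ℝ) :
    ∑ σ : Equiv.Perm (Fin M), ∑ τ : Equiv.Perm (Fin M),
      ((Equiv.Perm.sign σ : ℤ) : ℝ) * ((Equiv.Perm.sign τ : ℤ) : ℝ) *
        ∏ k, A (σ⁻¹ k) (τ⁻¹ k)
      = (Nat.factorial M : ℝ) * A.det := by
  have hdetT : ∑ ρ : Equiv.Perm (Fin M), ((Equiv.Perm.sign ρ : ℤ) : ℝ) * ∏ j, A j (ρ j)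
      = A.det := by
    rw [← Matrix.det_transpose A, Matrix.det_apply']
    exact Finset.sum_congr rfl fun ρ _ =>
      congrArg _ (Finset.prod_congr rfl fun j _ => rfl)
  have hinner : ∀ σ : Equiv.Perm (Fin M),
      ∑ τ : Equiv.Perm (Fin M),
        ((Equiv.Perm.sign σ : ℤ) : ℝ) * ((Equiv.Perm.sign τ : ℤ) : ℝ) *
          ∏ k, A (σ⁻¹ k) (τ⁻¹ k) = A.det := by
    intro σ
    let e : Equiv.Perm (Fin M) ≃ Equiv.Perm (Fin M) :=
      (Equiv.inv (Equiv.Perm (Fin M))).trans (Equiv.mulLeft σ)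
    rw [← Equiv.sum_comp e (fun τ => ((Equiv.Perm.sign σ : ℤ) : ℝ) *
      ((Equiv.Perm.sign τ : ℤ) : ℝ) * ∏ k, A (σ⁻¹ k) (τ⁻¹ k))]
    have step : ∀ ρ : Equiv.Perm (Fin M),
        ((Equiv.Perm.sign σ : ℤ) : ℝ) * ((Equiv.Perm.sign (e ρ) : ℤ) : ℝ) *
          ∏ k, A (σ⁻¹ k) ((e ρ)⁻¹ k)
        = ((Equiv.Perm.sign ρ : ℤ) : ℝ) * ∏ j, A j (ρ j) := by
      intro ρ
      have he : e ρ = σ * ρ⁻¹ := rfl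
      have hsign : ((Equiv.Perm.sign (σ * ρ⁻¹) : ℤ) : ℝ)
          = ((Equiv.Perm.sign σ : ℤ) : ℝ) * ((Equiv.Perm.sign ρ : ℤ) : ℝ) := by
        rw [Equiv.Perm.sign_mul, Equiv.Perm.sign_inv]
        push_cast
        ring
      have hprod : ∏ k, A (σ⁻¹ k) ((σ * ρ⁻¹)⁻¹ k) = ∏ j, A j (ρ j) := by
        rw [← Equiv.prod_comp σ (fun k => A (σ⁻¹ k) ((σ * ρ⁻¹)⁻¹ k))]
        refine Finset.prod_congr rfl fun j _ => ?_
        rw [Equiv.Perm.inv_def σ, Equiv.symm_apply_apply]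
        congr 1
        simp [Equiv.Perm.mul_apply]
      rw [he, hsign, hprod]
      have hs2 : ((Equiv.Perm.sign σ : ℤ) : ℝ) * ((Equiv.Perm.sign σ : ℤ) : ℝ) = 1 := by
        rcases Int.units_eq_one_or (Equiv.Perm.sign σ) with h | h <;> rw [h] <;> norm_num
      calc ((Equiv.Perm.sign σ : ℤ) : ℝ) *
            (((Equiv.Perm.sign σ : ℤ) : ℝ) * ((Equiv.Perm.sign ρ : ℤ) : ℝ)) * ∏ j, A j (ρ j)
          = (((Equiv.Perm.sign σ : ℤ) : ℝ) * ((Equiv.Perm.sign σ : ℤ) : ℝ)) *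
            (((Equiv.Perm.sign ρ : ℤ) : ℝ) * ∏ j, A j (ρ j)) := by ring
        _ = ((Equiv.Perm.sign ρ : ℤ) : ℝ) * ∏ j, A j (ρ j) := by rw [hs2, one_mul]
    rw [Finset.sum_congr rfl fun ρ _ => step ρ, hdetT]
  rw [Finset.sum_congr rfl fun σ _ => hinner σ, Finset.sum_const, Finset.card_univ,
    Fintype.card_perm, Fintype.card_fin, nsmul_eq_mul]

lemma prod_indicator (s : Set ℝ) (h : Fin M → ℝ → ℝ) (x : Fin M → ℝ) :
    ∏ k, Set.indicator s (h k) (x k)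
      = Set.indicator {y : Fin M → ℝ | ∀ i, y i ∈ s} (fun y => ∏ k, h k (y k)) x := by
  by_cases hx : ∀ i, x i ∈ s
  · rw [Set.indicator_of_mem (show x ∈ {y : Fin M → ℝ | ∀ i, y i ∈ s} from hx)]
    exact Finset.prod_congr rfl fun k _ => Set.indicator_of_mem (hx k) _
  · rw [Set.indicator_of_notMem (show x ∉ {y : Fin M → ℝ | ∀ i, y i ∈ s} from hx)]
    push_neg at hx
    obtain ⟨i, hi⟩ := hx
    exact Finset.prod_eq_zero (Finset.mem_univ i) (Set.indicator_of_notMem hi _)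

lemma cube_prod_integral (a b : ℝ) (g : Fin M → ℝ → ℝ) :
    ∫ x in cube a b M, ∏ k, g k (x k) = ∏ k, ∫ u in Set.Icc a b, g k u := by
  rw [← integral_indicator (measurableSet_cube a b)]
  have h1 : Set.indicator (cube a b M) (fun y : Fin M → ℝ => ∏ k, g k (y k))
      = fun x : Fin M → ℝ => ∏ k, Set.indicator (Set.Icc a b) (g k) (x k) := by
    funext x
    rw [prod_indicator]
    rfl
  rw [h1, MeasureTheory.integral_fintype_prod_volume_eq_prod
    (fun k => Set.indicator (Set.Icc a b) (g k))]
  exact Finset.prod_congr rfl fun k _ => integral_indicator measurableSet_Icc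

lemma cube_integral_det (m : ℕ) (a b : ℝ) :
    ∫ x in cube a b M, F m x = (Nat.factorial M : ℝ) * (matA m a b M).det := by
  have hFx : (fun x : Fin M → ℝ => F m x)
      = fun x => ∑ σ : Equiv.Perm (Fin M), ∑ τ : Equiv.Perm (Fin M),
        ((Equiv.Perm.sign σ : ℤ) : ℝ) * ((Equiv.Perm.sign τ : ℤ) : ℝ) *
          ∏ k, (x k ^ ((σ⁻¹ k : Fin M) : ℕ) * x k ^ ((τ⁻¹ k : Fin M) : ℕ) * w m (x k)) :=
    funext (expandF m)
  have hcont : ∀ σ τ : Equiv.Perm (Fin M), Continuous (fun x : Fin M → ℝ =>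
      ((Equiv.Perm.sign σ : ℤ) : ℝ) * ((Equiv.Perm.sign τ : ℤ) : ℝ) *
        ∏ k, (x k ^ ((σ⁻¹ k : Fin M) : ℕ) * x k ^ ((τ⁻¹ k : Fin M) : ℕ) * w m (x k))) := by
    intro σ τ
    refine continuous_const.mul (continuous_finset_prod _ fun k _ => ?_)
    exact (((continuous_apply k).pow _).mul ((continuous_apply k).pow _)).mul
      (((continuous_apply k).pow _).mul ((Real.continuous_exp).comp (continuous_apply k).neg))
  have hint : ∀ σ τ : Equiv.Perm (Fin M), IntegrableOn (fun x : Fin M → ℝ =>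
      ((Equiv.Perm.sign σ : ℤ) : ℝ) * ((Equiv.Perm.sign τ : ℤ) : ℝ) *
        ∏ k, (x k ^ ((σ⁻¹ k : Fin M) : ℕ) * x k ^ ((τ⁻¹ k : Fin M) : ℕ) * w m (x k)))
      (cube a b M) volume :=
    fun σ τ => ((hcont σ τ).continuousOn).integrableOn_compact (isCompact_cube a b)
  rw [hFx]
  rw [integral_finset_sum _ (fun σ _ => integrable_finset_sum _ (fun τ _ => hint σ τ))]
  have hterm : ∀ σ τ : Equiv.Perm (Fin M),
      ∫ x in cube a b M,
        ((Equiv.Perm.sign σ : ℤ) : ℝ) * ((Equiv.Perm.sign τ : ℤ) : ℝ) *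
          ∏ k, (x k ^ ((σ⁻¹ k : Fin M) : ℕ) * x k ^ ((τ⁻¹ k : Fin M) : ℕ) * w m (x k))
      = ((Equiv.Perm.sign σ : ℤ) : ℝ) * ((Equiv.Perm.sign τ : ℤ) : ℝ) *
          ∏ k, matA m a b M (σ⁻¹ k) (τ⁻¹ k) := by
    intro σ τ
    rw [integral_const_mul]
    congr 1
    rw [cube_prod_integral a b (fun k u => u ^ ((σ⁻¹ k : Fin M) : ℕ) *
      u ^ ((τ⁻¹ k : Fin M) : ℕ) * w m u)]
    rfl
  rw [Finset.sum_congr rfl fun σ _ => integral_finset_sum _ (fun τ _ => hint σ τ)]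
  rw [Finset.sum_congr rfl fun σ _ => Finset.sum_congr rfl fun τ _ => hterm σ τ]
  exact sum_perm_det (matA m a b M)

end Stmt15Aux

namespace Stmt15Aux

lemma matA_entry {M : ℕ} (m : ℕ) {a b : ℝ} (hab : a ≤ b) (i j : Fin M) :
    matA m a b M i j
      = lowGamma (m + (i : ℕ) + (j : ℕ) + 1) b - lowGamma (m + (i : ℕ) + (j : ℕ) + 1) a := by
  have hii : ∀ c : ℝ, IntervalIntegrable
      (fun u : ℝ => u ^ (m + (i : ℕ) + (j : ℕ)) * Real.exp (-u)) volume 0 c := by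
    intro c
    apply Continuous.intervalIntegrable
    fun_prop
  unfold lowGamma
  have hs : (m + (i : ℕ) + (j : ℕ) + 1) - 1 = m + (i : ℕ) + (j : ℕ) := rfl
  rw [hs, intervalIntegral.integral_interval_sub_left (hii b) (hii a),
    intervalIntegral.integral_of_le hab]
  simp only [matA, Matrix.of_apply]
  rw [MeasureTheory.integral_Icc_eq_integral_Ioc]
  refine setIntegral_congr_fun measurableSet_Ioc fun u _ => ?_
  rw [w, pow_add, pow_add]
  ring

end Stmt15Aux

/-- Probability that all eigenvalues of a complex central uncorrelated Wishart
matrix lie in `[a,b]` (up to the normalizing constant): the integral of the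
squared Vandermonde determinant times `Π_i x_i^{n-M} e^{-x_i}` over the ordered
region `b ≥ x_1 ≥ ⋯ ≥ x_M ≥ a` equals `det B` with
`b_{i,j} = γ(n-M+i+j-1, b) - γ(n-M+i+j-1, a)` (`i, j` one-indexed). -/
theorem stmt_15 {M n : ℕ} (hM : 1 ≤ M) (hMn : M ≤ n) {a b : ℝ}
    (ha : 0 ≤ a) (hab : a ≤ b) :
    (∫ x : Fin M → ℝ in
        {x | (∀ i j : Fin M, i ≤ j → x j ≤ x i) ∧ ∀ i : Fin M, x i ∈ Set.Icc a b},
      (∏ i : Fin M, ∏ j ∈ Finset.Ioi i, (x i - x j) ^ 2) *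
        ∏ i : Fin M, x i ^ (n - M) * Real.exp (-x i))
    = (Matrix.of fun i j : Fin M =>
        lowGamma (n - M + (i : ℕ) + (j : ℕ) + 1) b -
          lowGamma (n - M + (i : ℕ) + (j : ℕ) + 1) a).det := by
  classical
  have hset : {x : Fin M → ℝ | (∀ i j : Fin M, i ≤ j → x j ≤ x i) ∧ ∀ i : Fin M, x i ∈ Set.Icc a b}
      = Stmt15Aux.sect a b (1 : Equiv.Perm (Fin M)) := rfl
  have hfun : (fun x : Fin M → ℝ =>
      (∏ i : Fin M, ∏ j ∈ Finset.Ioi i, (x i - x j) ^ 2) *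
        ∏ i : Fin M, x i ^ (n - M) * Real.exp (-x i))
      = fun x => Stmt15Aux.F (n - M) x := by
    funext x
    rw [Stmt15Aux.vdm_sq]
    rfl
  rw [hset, hfun]
  have hfac : (Nat.factorial M : ℝ) ≠ 0 := by
    exact_mod_cast Nat.factorial_ne_zero M
  have hkey : ∫ x in Stmt15Aux.sect a b (1 : Equiv.Perm (Fin M)), Stmt15Aux.F (n - M) x
      = (Stmt15Aux.matA (n - M) a b M).det := by
    apply mul_left_cancel₀ hfac
    rw [← Stmt15Aux.cube_integral_eq_card_sect, Stmt15Aux.cube_integral_det]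
  rw [hkey]
  congr 1
  ext i j
  rw [Matrix.of_apply, ← Stmt15Aux.matA_entry (n - M) hab i j]
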